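/- (Equation (43): product factorization of the expanded array's sum pattern.) Let N, M ≥ 1, let u, v : {0,…,N−1} → ℂ and w_PA, w_PB : {0,…,M−1} → ℂ be arbitrary sequences. Define sequences w_A, w_B of length 2NM by: for 0 ≤ l ≤ N−1 and 0 ≤ m ≤ M−1, w_A(lM+m) = u(l)·w_PA(m), w_A(NM+lM+m) = −v(l)·conj(w_PB(M−1−m)), w_B(lM+m) = u(l)·w_PB(m), w_B(NM+lM+m) = v(l)·conj(w_PA(M−1−m)). Then for every ψ ∈ ℝ, |F_{w_A}(ψ)|² + |F_{w_B}(ψ)|² = ( |F_u(M·ψ)|² + |F_v(M·ψ)|² ) · ( |F_{w_PA}(ψ)|² + |F_{w_PB}(ψ)|² ). -/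

import Mathlib

/-- The array factor of a length-`M` sequence `u` at spatial frequency `ψ`:
`F_u(ψ) = Σ_{m=0}^{M-1} u(m) · exp(i·m·ψ)`. -/
noncomputable def arrayFactor (M : ℕ) (u : ℕ → ℂ) (ψ : ℝ) : ℂ :=
  ∑ m ∈ Finset.range M, u m * Complex.exp (Complex.I * (m : ℂ) * (ψ : ℂ))

/-- The aperiodic autocorrelation of a length-`M` sequence `u` at shift `τ`:
`R_u(τ) = Σ_{m=0}^{M-1-τ} u(m) · conj(u(m+τ))`. -/
noncomputable def aacf (M : ℕ) (u : ℕ → ℂ) (τ : ℕ) : ℂ :=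
  ∑ m ∈ Finset.range (M - τ), u m * (starRingEnd ℂ) (u (m + τ))

open Complex in
lemma sum_range_mul_decomp (N M : ℕ) (f : ℕ → ℂ) :
    ∑ i ∈ Finset.range (N * M), f i
      = ∑ l ∈ Finset.range N, ∑ m ∈ Finset.range M, f (l * M + m) := by
  induction N with
  | zero => simp
  | succ n ih =>
    rw [Nat.succ_mul, Finset.sum_range_add, ih, Finset.sum_range_succ]

open Complex in
lemma conj_arrayFactor (M : ℕ) (q : ℕ → ℂ) (ψ : ℝ) :
    (starRingEnd ℂ) (arrayFactor M q ψ)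
      = ∑ m ∈ Finset.range M, (starRingEnd ℂ) (q m) * Complex.exp (-(I * (m : ℂ) * ψ)) := by
  rw [arrayFactor, map_sum]
  refine Finset.sum_congr rfl fun m _ => ?_
  rw [map_mul, ← Complex.exp_conj]
  congr 2
  simp [map_mul, Complex.conj_I]

open Complex in
lemma reflected_sum (M : ℕ) (hM : 1 ≤ M) (q : ℕ → ℂ) (ψ : ℝ) :
    ∑ m ∈ Finset.range M, (starRingEnd ℂ) (q (M - 1 - m)) * Complex.exp (I * (m : ℂ) * ψ)
      = Complex.exp (I * ((M : ℂ) - 1) * ψ) * (starRingEnd ℂ) (arrayFactor M q ψ) := by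
  rw [conj_arrayFactor, Finset.mul_sum]
  rw [← Finset.sum_range_reflect
    (fun m => (starRingEnd ℂ) (q (M - 1 - m)) * Complex.exp (I * (m : ℂ) * ψ)) M]
  refine Finset.sum_congr rfl fun j hj => ?_
  have hj' : j < M := Finset.mem_range.mp hj
  have hjle : j ≤ M - 1 := Nat.le_sub_one_of_lt hj'
  have h1 : M - 1 - (M - 1 - j) = j := by omega
  rw [h1]
  have h2 : ((M - 1 - j : ℕ) : ℂ) = (M : ℂ) - 1 - (j : ℂ) := by
    have : ((M - 1 - j : ℕ) : ℝ) = (M : ℝ) - 1 - (j : ℝ) := by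
      rw [Nat.cast_sub hjle, Nat.cast_sub hM]
      norm_num
    exact_mod_cast congrArg (Complex.ofReal) this
  rw [h2]
  have h3 : Complex.exp (Complex.I * ((M : ℂ) - 1 - (j : ℂ)) * ψ)
      = Complex.exp (Complex.I * ((M : ℂ) - 1) * ψ) * Complex.exp (-(Complex.I * (j : ℂ) * ψ)) := by
    rw [← Complex.exp_add]
    congr 1
    ring
  rw [h3]
  ring

open Complex in
lemma factor_decomp (N M : ℕ) (hM : 1 ≤ M) (u v p q w : ℕ → ℂ)
    (h1 : ∀ l < N, ∀ m < M, w (l * M + m) = u l * p m)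
    (h2 : ∀ l < N, ∀ m < M,
      w (N * M + l * M + m) = v l * (starRingEnd ℂ) (q (M - 1 - m)))
    (ψ : ℝ) :
    arrayFactor (2 * N * M) w ψ =
      arrayFactor N u (M * ψ) * arrayFactor M p ψ +
        (Complex.exp (I * ((N * M : ℕ) : ℂ) * ψ) * Complex.exp (I * ((M : ℂ) - 1) * ψ)) *
          (arrayFactor N v (M * ψ) * (starRingEnd ℂ) (arrayFactor M q ψ)) := by
  have h2NM : 2 * N * M = N * M + N * M := by ring
  rw [arrayFactor, h2NM, Finset.sum_range_add, sum_range_mul_decomp,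
    sum_range_mul_decomp]
  congr 1
  · rw [arrayFactor, arrayFactor, Finset.sum_mul_sum]
    refine Finset.sum_congr rfl fun l hl => Finset.sum_congr rfl fun m hm => ?_
    rw [h1 l (Finset.mem_range.mp hl) m (Finset.mem_range.mp hm)]
    have hexp : Complex.exp (I * ((l * M + m : ℕ) : ℂ) * ψ)
        = Complex.exp (I * (l : ℂ) * ((M * ψ : ℝ) : ℂ)) * Complex.exp (I * (m : ℂ) * ψ) := by
      rw [← Complex.exp_add]
      congr 1
      push_cast
      ring
    rw [hexp]
    ring
  · have step : ∀ l ∈ Finset.range N, ∀ m ∈ Finset.range M,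
        w (N * M + (l * M + m)) * Complex.exp (I * ((N * M + (l * M + m) : ℕ) : ℂ) * ψ)
          = Complex.exp (I * ((N * M : ℕ) : ℂ) * ψ) *
              ((v l * Complex.exp (I * (l : ℂ) * ((M * ψ : ℝ) : ℂ))) *
                ((starRingEnd ℂ) (q (M - 1 - m)) * Complex.exp (I * (m : ℂ) * ψ))) := by
      intro l hl m hm
      have hw := h2 l (Finset.mem_range.mp hl) m (Finset.mem_range.mp hm)
      rw [Nat.add_assoc] at hw
      rw [hw]
      have hexp : Complex.exp (I * ((N * M + (l * M + m) : ℕ) : ℂ) * ψ)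
          = Complex.exp (I * ((N * M : ℕ) : ℂ) * ψ) *
              (Complex.exp (I * (l : ℂ) * ((M * ψ : ℝ) : ℂ)) *
                Complex.exp (I * (m : ℂ) * ψ)) := by
        rw [← Complex.exp_add, ← Complex.exp_add]
        congr 1
        push_cast
        ring
      rw [hexp]
      ring
    calc ∑ l ∈ Finset.range N, ∑ m ∈ Finset.range M,
            w (N * M + (l * M + m)) * Complex.exp (I * ((N * M + (l * M + m) : ℕ) : ℂ) * ψ)
        = Complex.exp (I * ((N * M : ℕ) : ℂ) * ψ) *
            ((∑ l ∈ Finset.range N, v l * Complex.exp (I * (l : ℂ) * ((M * ψ : ℝ) : ℂ))) *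
              (∑ m ∈ Finset.range M,
                (starRingEnd ℂ) (q (M - 1 - m)) * Complex.exp (I * (m : ℂ) * ψ))) := by
          rw [Finset.sum_mul_sum, Finset.mul_sum]
          refine Finset.sum_congr rfl fun l hl => ?_
          rw [Finset.mul_sum]
          exact Finset.sum_congr rfl fun m hm => step l hl m hm
      _ = _ := by
          rw [reflected_sum M hM q ψ]
          simp only [arrayFactor]
          ring

open Complex in
lemma arrayFactor_neg (N : ℕ) (v : ℕ → ℂ) (ψ : ℝ) :
    arrayFactor N (fun l => -(v l)) ψ = -arrayFactor N v ψ := by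
  simp [arrayFactor, neg_mul, Finset.sum_neg_distrib]

/-- Equation (43): product factorization of the expanded array's sum power pattern. -/
theorem expanded_array_product_factorization (N M : ℕ) (hN : 1 ≤ N) (hM : 1 ≤ M)
    (u v wPA wPB wA wB : ℕ → ℂ)
    (hA1 : ∀ l < N, ∀ m < M, wA (l * M + m) = u l * wPA m)
    (hA2 : ∀ l < N, ∀ m < M,
      wA (N * M + l * M + m) = -(v l * (starRingEnd ℂ) (wPB (M - 1 - m))))
    (hB1 : ∀ l < N, ∀ m < M, wB (l * M + m) = u l * wPB m)
    (hB2 : ∀ l < N, ∀ m < M,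
      wB (N * M + l * M + m) = v l * (starRingEnd ℂ) (wPA (M - 1 - m)))
    (ψ : ℝ) :
    ‖arrayFactor (2 * N * M) wA ψ‖ ^ 2 +
        ‖arrayFactor (2 * N * M) wB ψ‖ ^ 2 =
      (‖arrayFactor N u (M * ψ)‖ ^ 2 +
          ‖arrayFactor N v (M * ψ)‖ ^ 2) *
        (‖arrayFactor M wPA ψ‖ ^ 2 +
          ‖arrayFactor M wPB ψ‖ ^ 2) := by
  have hA2' : ∀ l < N, ∀ m < M,
      wA (N * M + l * M + m) = (fun l => -(v l)) l * (starRingEnd ℂ) (wPB (M - 1 - m)) := by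
    intro l hl m hm
    rw [hA2 l hl m hm]
    ring
  have hFA := factor_decomp N M hM u (fun l => -(v l)) wPA wPB wA hA1 hA2' ψ
  have hFB := factor_decomp N M hM u v wPB wPA wB hB1 hB2 ψ
  rw [arrayFactor_neg] at hFA
  set A := arrayFactor N u (M * ψ) with hA
  set B := arrayFactor N v (M * ψ) with hB
  set P := arrayFactor M wPA ψ with hP
  set Q := arrayFactor M wPB ψ with hQ
  set c := Complex.exp (Complex.I * ((N * M : ℕ) : ℂ) * ψ) *
    Complex.exp (Complex.I * ((M : ℂ) - 1) * ψ) with hc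
  have helper : ∀ r : ℝ, Complex.exp (Complex.I * (r : ℂ)) *
      (starRingEnd ℂ) (Complex.exp (Complex.I * (r : ℂ))) = 1 := by
    intro r
    rw [← Complex.exp_conj, ← Complex.exp_add]
    simp only [map_mul, Complex.conj_I, Complex.conj_ofReal]
    rw [show Complex.I * (r : ℂ) + -Complex.I * (r : ℂ) = 0 by ring, Complex.exp_zero]
  have hc1 : c = Complex.exp (Complex.I *
      ((((N * M : ℕ) : ℝ) * ψ + ((M : ℝ) - 1) * ψ : ℝ) : ℂ)) := by
    rw [hc, ← Complex.exp_add]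
    congr 1
    push_cast
    ring
  have hcc : c * (starRingEnd ℂ) c = 1 := by
    rw [hc1]
    exact helper _
  have key : ∀ z : ℂ, ((‖z‖ : ℂ)) ^ 2 = z * (starRingEnd ℂ) z := by
    intro z
    rw [← Complex.ofReal_pow, Complex.sq_norm, Complex.mul_conj]
  rw [← Complex.ofReal_inj]
  push_cast
  rw [key, key, key, key, key, key, hFA, hFB]
  clear_value A B P Q c
  simp only [map_add, map_mul, map_neg, map_sub, Complex.conj_conj]
  linear_combination ((starRingEnd ℂ) B * B *
    (P * (starRingEnd ℂ) P + Q * (starRingEnd ℂ) Q)) * hcc
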